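/- Let n ≥ 1 and let U' be a 2^n × 2^n unitary matrix. Set U₁ := U' (acting on n qubits) and U₂ := I_{2^n} ⊗ |0⟩⟨0| + U' ⊗ |1⟩⟨1| (the controlled-U' on n + 1 qubits with control qubit n + 1). Define B(U₁) := 1 − C_LHST(U₁, I_{2^n}) and B(U₂) := 1 − C_LHST(U₂, I_{2^{n+1}}). Then Re(Tr(U')) = 2^n · ( (n+1)(2B(U₂) − 1) − n·B(U₁) ); hence the real part of the trace of U' is recovered exactly from two evaluations of the local Hilbert-Schmidt cost. -/

import Mathlib

open Matrix Kronecker Complex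

noncomputable section

/-- The Hilbert-Schmidt test cost `C_HST(U,V) = 1 - |Tr(V†U)|²/d²` for `d × d` matrices. -/
def CHSTd (d : ℕ) (U V : Matrix (Fin d) (Fin d) ℂ) : ℝ :=
  1 - ‖(Vᴴ * U).trace‖ ^ 2 / (d : ℝ) ^ 2

/-- The Hilbert-Schmidt test cost for unitaries on `n` qubits (`d = 2^n`). -/
def CHST (n : ℕ) (U V : Matrix (Fin n → Fin 2) (Fin n → Fin 2) ℂ) : ℝ :=
  1 - ‖(Vᴴ * U).trace‖ ^ 2 / ((2 : ℝ) ^ n) ^ 2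

/-- The local channel `E_j(ρ) = Tr_{j̄}[ W (ρ_(j) ⊗ I/2^(n-1)) W† ]`, where `ρ` is placed on
qubit `j`, the maximally mixed state on the other qubits, and the partial trace is over all
qubits except `j`.  (The sum over `r` double-counts the assignments of the qubits other than
`j`, whence the extra factor `1/2`.) -/
def Ej (n : ℕ) (j : Fin n) (W : Matrix (Fin n → Fin 2) (Fin n → Fin 2) ℂ)
    (ρ : Matrix (Fin 2) (Fin 2) ℂ) : Matrix (Fin 2) (Fin 2) ℂ :=
  Matrix.of fun a b =>
    (1 / 2 ^ (n - 1) : ℂ) * (1 / 2) *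
      ∑ r : Fin n → Fin 2, ∑ s : Fin n → Fin 2, ∑ t : Fin n → Fin 2,
        (if Function.update s j 0 = Function.update t j 0 then
          W (Function.update r j a) s * ρ (s j) (t j) * star (W (Function.update r j b) t)
        else 0)

/-- The two-qubit maximally entangled state `|Φ₂⁺⟩ = (|00⟩+|11⟩)/√2`. -/
def phi2 : (Fin 2 × Fin 2) → ℂ := fun p => if p.1 = p.2 then ((1 / Real.sqrt 2 : ℝ) : ℂ) else 0

/-- The projector `|Φ₂⁺⟩⟨Φ₂⁺|`. -/
def phi2Proj : Matrix (Fin 2 × Fin 2) (Fin 2 × Fin 2) ℂ :=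
  Matrix.of fun p q => if p.1 = p.2 ∧ q.1 = q.2 then (1 / 2 : ℂ) else 0

/-- `(E ⊗ id)(ρ)` for a map `E` on one-qubit matrices and a two-qubit matrix `ρ`. -/
def tensorId (E : Matrix (Fin 2) (Fin 2) ℂ → Matrix (Fin 2) (Fin 2) ℂ)
    (ρ : Matrix (Fin 2 × Fin 2) (Fin 2 × Fin 2) ℂ) :
    Matrix (Fin 2 × Fin 2) (Fin 2 × Fin 2) ℂ :=
  Matrix.of fun p q => ∑ a : Fin 2, ∑ b : Fin 2,
    ρ (a, p.2) (b, q.2) * E (Matrix.single a b 1) p.1 q.1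

/-- The entanglement fidelity `F_e^(j) = ⟨Φ₂⁺|(E_j ⊗ id)(|Φ₂⁺⟩⟨Φ₂⁺|)|Φ₂⁺⟩`
(as a complex number), with `W = U V†`. -/
def FeC (n : ℕ) (j : Fin n) (U V : Matrix (Fin n → Fin 2) (Fin n → Fin 2) ℂ) : ℂ :=
  star phi2 ⬝ᵥ (tensorId (Ej n j (U * Vᴴ)) phi2Proj).mulVec phi2

/-- The entanglement fidelity `F_e^(j)` (a real number). -/
def Fe (n : ℕ) (j : Fin n) (U V : Matrix (Fin n → Fin 2) (Fin n → Fin 2) ℂ) : ℝ :=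
  (FeC n j U V).re

/-- The local Hilbert-Schmidt cost for qubit `j`: `C_LHST^(j)(U,V) = 1 - F_e^(j)`. -/
def CLHSTj (n : ℕ) (j : Fin n) (U V : Matrix (Fin n → Fin 2) (Fin n → Fin 2) ℂ) : ℝ :=
  1 - Fe n j U V

/-- The local Hilbert-Schmidt cost `C_LHST(U,V) = (1/n) Σ_j C_LHST^(j)(U,V)`. -/
def CLHST (n : ℕ) (U V : Matrix (Fin n → Fin 2) (Fin n → Fin 2) ℂ) : ℝ :=
  (1 / n : ℝ) * ∑ j : Fin n, CLHSTj n j U V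

end

noncomputable section

/-- The controlled-`U'` unitary `I ⊗ |0⟩⟨0| + U' ⊗ |1⟩⟨1|` on `n + 1` qubits, with qubit
`n + 1` (the last qubit) the control: it acts as the identity on the first `n` qubits
when the control is `|0⟩` and as `U'` when the control is `|1⟩`. -/
def ctrlLast (n : ℕ) (U' : Matrix (Fin n → Fin 2) (Fin n → Fin 2) ℂ) :
    Matrix (Fin (n + 1) → Fin 2) (Fin (n + 1) → Fin 2) ℂ :=
  Matrix.of fun s t =>
    if s (Fin.last n) = t (Fin.last n) then
      (if s (Fin.last n) = 0 then
        (if (fun i : Fin n => s i.castSucc) = (fun i : Fin n => t i.castSucc) then 1 else 0)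
      else U' (fun i : Fin n => s i.castSucc) (fun i : Fin n => t i.castSucc))
    else 0


noncomputable section AuxFe

open Matrix Complex

/-- `(e.symm (c, x))`, building a function `Fin m → Fin 2` from the value `c` at `j` and
values `x` elsewhere. -/
def eS {m : ℕ} (j : Fin m) (c : Fin 2) (x : {i : Fin m // i ≠ j} → Fin 2) : Fin m → Fin 2 :=
  (Equiv.funSplitAt j (Fin 2)).symm (c, x)

variable {m : ℕ} (j : Fin m)

@[simp] lemma eS_j (c : Fin 2) (x : {i // i ≠ j} → Fin 2) : eS j c x j = c := by
  simp [eS, Equiv.funSplitAt, Equiv.piSplitAt]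

lemma eS_ne {i : Fin m} (h : i ≠ j) (c : Fin 2) (x : {i // i ≠ j} → Fin 2) :
    eS j c x i = x ⟨i, h⟩ := by
  simp [eS, Equiv.funSplitAt, Equiv.piSplitAt, h]

@[simp] lemma update_eS (c d : Fin 2) (x : {i // i ≠ j} → Fin 2) :
    Function.update (eS j c x) j d = eS j d x := by
  funext i
  rcases eq_or_ne i j with rfl | h
  · simp [eS, Equiv.funSplitAt, Equiv.piSplitAt]
  · simp [eS, Equiv.funSplitAt, Equiv.piSplitAt, h, Function.update_of_ne h]

@[simp] lemma eS_inj (c d : Fin 2) (x y : {i // i ≠ j} → Fin 2) :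
    eS j c x = eS j d y ↔ c = d ∧ x = y := by
  rw [eS, eS, EmbeddingLike.apply_eq_iff_eq, Prod.mk.injEq]

lemma sumE (f : (Fin m → Fin 2) → ℂ) :
    ∑ s, f s = ∑ c : Fin 2, ∑ x : {i // i ≠ j} → Fin 2, f (eS j c x) := by
  rw [← Equiv.sum_comp (Equiv.funSplitAt j (Fin 2)).symm f, Fintype.sum_prod_type]
  rfl

lemma step1 (E : Matrix (Fin 2) (Fin 2) ℂ → Matrix (Fin 2) (Fin 2) ℂ) :
    star phi2 ⬝ᵥ (tensorId E phi2Proj).mulVec phi2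
      = (1/4 : ℂ) * ∑ a : Fin 2, ∑ b : Fin 2, E (Matrix.single a b 1) a b := by
  have h2 : ((Real.sqrt 2 : ℝ) : ℂ)^2 = 2 := by
    rw [sq, ← Complex.ofReal_mul, Real.mul_self_sqrt (by norm_num)]
    norm_num
  simp only [dotProduct, mulVec, tensorId, phi2, phi2Proj, Matrix.of_apply,
    Fintype.sum_prod_type, Fin.sum_univ_two, Pi.star_apply]
  norm_num
  ring_nf
  have h3 : (((Real.sqrt 2 : ℝ) : ℂ))⁻¹^2 = (2:ℂ)⁻¹ := by rw [inv_pow, h2]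
  rw [h3]; ring

lemma EjT (U : Matrix (Fin m → Fin 2) (Fin m → Fin 2) ℂ) (a b : Fin 2) :
    Ej m j U (Matrix.single a b 1) a b
      = (1 / 2 ^ (m - 1) : ℂ) *
          ∑ x : {i // i ≠ j} → Fin 2, ∑ y : {i // i ≠ j} → Fin 2,
            U (eS j a x) (eS j a y) * star (U (eS j b x) (eS j b y)) := by
  rw [Ej, Matrix.of_apply]
  simp only [sumE j]
  simp only [update_eS, eS_j, eS_inj, Matrix.single, Matrix.of_apply,
    true_and, ite_and, mul_ite, mul_zero, mul_one, ite_mul, zero_mul]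
  simp only [Finset.sum_ite_eq, Finset.sum_ite_eq', Finset.mem_univ, if_true,
    Finset.sum_ite_irrel, Finset.sum_const_zero]
  rw [Finset.sum_const, Finset.card_univ, Fintype.card_fin, nsmul_eq_mul]
  push_cast
  ring

/-- The partial trace over qubit `j`, as a matrix indexed by the remaining qubits. -/
def Tm {m : ℕ} (j : Fin m) (U : Matrix (Fin m → Fin 2) (Fin m → Fin 2) ℂ)
    (x y : {i : Fin m // i ≠ j} → Fin 2) : ℂ :=
  ∑ c : Fin 2, U (eS j c x) (eS j c y)

lemma swap4 {K : Type*} [Fintype K] (G : Fin 2 → Fin 2 → K → K → ℂ) :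
    (∑ x : K, ∑ y : K, ∑ a : Fin 2, ∑ b : Fin 2, G a b x y)
      = ∑ a : Fin 2, ∑ b : Fin 2, ∑ x : K, ∑ y : K, G a b x y := by
  rw [show (∑ x : K, ∑ y : K, ∑ a : Fin 2, ∑ b : Fin 2, G a b x y)
      = ∑ p : K × K, ∑ q : Fin 2 × Fin 2, G q.1 q.2 p.1 p.2 by
    rw [Fintype.sum_prod_type]
    exact Finset.sum_congr rfl fun x _ => Finset.sum_congr rfl fun y _ => by
      rw [Fintype.sum_prod_type]]
  rw [Finset.sum_comm, Fintype.sum_prod_type]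
  exact Finset.sum_congr rfl fun a _ => Finset.sum_congr rfl fun b _ => by
    rw [Fintype.sum_prod_type]

lemma FeC_formula (U : Matrix (Fin m → Fin 2) (Fin m → Fin 2) ℂ) :
    FeC m j U 1 = (1/4 : ℂ) * (1 / 2 ^ (m - 1)) *
      ∑ x : {i // i ≠ j} → Fin 2, ∑ y : {i // i ≠ j} → Fin 2,
        Tm j U x y * star (Tm j U x y) := by
  have key : ∀ x y, Tm j U x y * star (Tm j U x y)
      = ∑ a : Fin 2, ∑ b : Fin 2,
          U (eS j a x) (eS j a y) * star (U (eS j b x) (eS j b y)) := by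
    intro x y
    rw [Tm, star_sum, Finset.sum_mul_sum]
  rw [FeC, Matrix.conjTranspose_one, Matrix.mul_one, step1]
  simp only [EjT j, ← Finset.mul_sum]
  rw [← swap4 (fun a b x y => U (eS j a x) (eS j a y) * star (U (eS j b x) (eS j b y)))]
  simp only [← key]
  ring

lemma Fe_formula (U : Matrix (Fin m → Fin 2) (Fin m → Fin 2) ℂ) :
    Fe m j U 1 = (1/4 : ℝ) * (1 / 2 ^ (m - 1)) *
      ∑ x : {i // i ≠ j} → Fin 2, ∑ y : {i // i ≠ j} → Fin 2,
        Complex.normSq (Tm j U x y) := by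
  rw [Fe, FeC_formula]
  have : ∀ x y : {i // i ≠ j} → Fin 2, Tm j U x y * star (Tm j U x y)
      = ((Complex.normSq (Tm j U x y) : ℝ) : ℂ) := by
    intro x y
    rw [show (star (Tm j U x y)) = (starRingEnd ℂ) (Tm j U x y) from rfl, Complex.mul_conj]
  simp only [this]
  rw [show ((1/4 : ℂ) * (1 / 2 ^ (m - 1)) = ((((1:ℝ)/4) * (1 / 2 ^ (m - 1)) : ℝ) : ℂ)) by push_cast; ring]
  norm_cast

end AuxFe


noncomputable section AuxCtrl

open Matrix Complex

variable {n : ℕ}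

/-- Glue values on the first `n` qubits (off `i₀`) with a value on the last qubit. -/
def glue (i₀ : Fin n) (x1 : {i : Fin n // i ≠ i₀} → Fin 2) (c : Fin 2) :
    {i' : Fin (n+1) // i' ≠ Fin.castSucc i₀} → Fin 2 :=
  fun p => if h : (p : Fin (n+1)) = Fin.last n then c
    else x1 ⟨(p : Fin (n+1)).castPred h,
      fun hc => p.2 ((Fin.castSucc_castPred _ h).symm.trans (congrArg Fin.castSucc hc))⟩

lemma last_ne_castSucc (i₀ : Fin n) : Fin.last n ≠ Fin.castSucc i₀ :=
  (Fin.castSucc_lt_last i₀).ne'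

/-- The gluing equivalence for a non-control qubit. -/
def glueEquiv (i₀ : Fin n) :
    ({i : Fin n // i ≠ i₀} → Fin 2) × Fin 2 ≃ ({i' : Fin (n+1) // i' ≠ Fin.castSucc i₀} → Fin 2) where
  toFun p := glue i₀ p.1 p.2
  invFun x := (fun q => x ⟨Fin.castSucc q.1, by
      simp only [ne_eq, Fin.castSucc_inj]; exact q.2⟩, x ⟨Fin.last n, last_ne_castSucc i₀⟩)
  left_inv := by
    rintro ⟨x1, c⟩
    refine Prod.ext ?_ ?_
    · funext q
      simp only [glue]
      rw [dif_neg (Fin.castSucc_lt_last q.1).ne]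
      exact congrArg x1 (Subtype.ext (Fin.castPred_castSucc (Fin.castSucc_lt_last _).ne))
    · simp [glue]
  right_inv := by
    intro x
    funext p
    simp only [glue]
    rcases eq_or_ne (p : Fin (n+1)) (Fin.last n) with h | h
    · rw [dif_pos h]
      exact congrArg x (Subtype.ext h.symm)
    · rw [dif_neg h]
      exact congrArg x (Subtype.ext (Fin.castSucc_castPred _ h))

lemma sum_glue (i₀ : Fin n) (f : ({i' : Fin (n+1) // i' ≠ Fin.castSucc i₀} → Fin 2) → ℝ) :
    ∑ x, f x = ∑ x1 : {i : Fin n // i ≠ i₀} → Fin 2, ∑ c : Fin 2, f (glue i₀ x1 c) := by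
  rw [← Equiv.sum_comp (glueEquiv i₀) f, Fintype.sum_prod_type]
  rfl

lemma eS_glue_last (i₀ : Fin n) (c c0 : Fin 2) (x1 : {i : Fin n // i ≠ i₀} → Fin 2) :
    eS (Fin.castSucc i₀) c (glue i₀ x1 c0) (Fin.last n) = c0 := by
  rw [eS_ne _ (last_ne_castSucc i₀)]
  simp [glue]

lemma eS_glue_castSucc (i₀ : Fin n) (c c0 : Fin 2) (x1 : {i : Fin n // i ≠ i₀} → Fin 2) :
    (fun i : Fin n => eS (Fin.castSucc i₀) c (glue i₀ x1 c0) (Fin.castSucc i)) = eS i₀ c x1 := by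
  funext i
  rcases eq_or_ne i i₀ with rfl | h
  · rw [eS_j, eS_j]
  · rw [eS_ne _ (by simpa [Fin.castSucc_inj] using h), eS_ne _ h]
    simp only [glue]
    rw [dif_neg (Fin.castSucc_lt_last i).ne]
    exact congrArg x1 (Subtype.ext (Fin.castPred_castSucc (Fin.castSucc_lt_last _).ne))

lemma Tm_ctrl_castSucc (i₀ : Fin n) (U' : Matrix (Fin n → Fin 2) (Fin n → Fin 2) ℂ)
    (x1 y1 : {i : Fin n // i ≠ i₀} → Fin 2) (c0 c1 : Fin 2) :
    Tm (Fin.castSucc i₀) (ctrlLast n U') (glue i₀ x1 c0) (glue i₀ y1 c1)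
      = if c0 = c1 then
          (if c0 = 0 then (if x1 = y1 then 2 else 0) else Tm i₀ U' x1 y1)
        else 0 := by
  rw [Tm]
  have h1 : ∀ c : Fin 2,
      ctrlLast n U' (eS (Fin.castSucc i₀) c (glue i₀ x1 c0))
        (eS (Fin.castSucc i₀) c (glue i₀ y1 c1))
      = if c0 = c1 then
          (if c0 = 0 then (if x1 = y1 then 1 else 0) else U' (eS i₀ c x1) (eS i₀ c y1))
        else 0 := by
    intro c
    rw [ctrlLast, Matrix.of_apply]
    simp only [eS_glue_last, eS_glue_castSucc, eS_inj, true_and]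
  simp only [h1]
  rcases eq_or_ne c0 c1 with rfl | h
  · by_cases h0 : c0 = 0
    · by_cases hxy : x1 = y1 <;> simp [h0, hxy, Fin.sum_univ_two]
    · simp [h0, Tm, Fin.sum_univ_two]
  · simp [h]

lemma S2_castSucc (hn : 1 ≤ n) (i₀ : Fin n) (U' : Matrix (Fin n → Fin 2) (Fin n → Fin 2) ℂ) :
    (∑ x, ∑ y, Complex.normSq (Tm (Fin.castSucc i₀) (ctrlLast n U') x y))
      = 4 * 2^(n-1) +
        ∑ x1 : {i : Fin n // i ≠ i₀} → Fin 2, ∑ y1 : {i : Fin n // i ≠ i₀} → Fin 2,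
          Complex.normSq (Tm i₀ U' x1 y1) := by
  rw [sum_glue]
  have h1 : ∀ x1 c0, (∑ y, Complex.normSq (Tm (Fin.castSucc i₀) (ctrlLast n U') (glue i₀ x1 c0) y))
      = ∑ y1 : {i : Fin n // i ≠ i₀} → Fin 2, ∑ c1 : Fin 2,
          Complex.normSq (Tm (Fin.castSucc i₀) (ctrlLast n U') (glue i₀ x1 c0) (glue i₀ y1 c1)) := by
    intro x1 c0
    rw [sum_glue]
  simp only [h1, Tm_ctrl_castSucc]
  have inner : ∀ x1 : {i : Fin n // i ≠ i₀} → Fin 2,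
      (∑ c0 : Fin 2, ∑ y1 : {i : Fin n // i ≠ i₀} → Fin 2, ∑ c1 : Fin 2,
        Complex.normSq (if c0 = c1 then
          (if c0 = 0 then (if x1 = y1 then (2:ℂ) else 0) else Tm i₀ U' x1 y1) else 0))
      = 4 + ∑ y1 : {i : Fin n // i ≠ i₀} → Fin 2, Complex.normSq (Tm i₀ U' x1 y1) := by
    intro x1
    rw [Fin.sum_univ_two]
    have t0 : (∑ y1 : {i : Fin n // i ≠ i₀} → Fin 2, ∑ c1 : Fin 2,
        Complex.normSq (if (0:Fin 2) = c1 then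
          (if (0:Fin 2) = 0 then (if x1 = y1 then (2:ℂ) else 0) else Tm i₀ U' x1 y1) else 0))
        = 4 := by
      have : ∀ y1 : {i : Fin n // i ≠ i₀} → Fin 2, (∑ c1 : Fin 2,
          Complex.normSq (if (0:Fin 2) = c1 then
            (if (0:Fin 2) = 0 then (if x1 = y1 then (2:ℂ) else 0) else Tm i₀ U' x1 y1) else 0))
          = if x1 = y1 then 4 else 0 := by
        intro y1
        by_cases hxy : x1 = y1 <;>
          norm_num [Fin.sum_univ_two, hxy, Complex.normSq_apply]
      rw [Finset.sum_congr rfl fun y1 _ => this y1]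
      simp
    have t1 : (∑ y1 : {i : Fin n // i ≠ i₀} → Fin 2, ∑ c1 : Fin 2,
        Complex.normSq (if (1:Fin 2) = c1 then
          (if (1:Fin 2) = 0 then (if x1 = y1 then (2:ℂ) else 0) else Tm i₀ U' x1 y1) else 0))
        = ∑ y1 : {i : Fin n // i ≠ i₀} → Fin 2, Complex.normSq (Tm i₀ U' x1 y1) := by
      refine Finset.sum_congr rfl fun y1 _ => ?_
      norm_num [Fin.sum_univ_two]
    rw [t0, t1]
  rw [Finset.sum_congr rfl fun x1 _ => inner x1, Finset.sum_add_distrib, Finset.sum_const,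
    Finset.card_univ, nsmul_eq_mul, Fintype.card_fun, Fintype.card_subtype_compl,
    Fintype.card_fin]
  simp [mul_comm]

/-- Glue for the control (last) qubit. -/
def glueL (x : Fin n → Fin 2) : {i' : Fin (n+1) // i' ≠ Fin.last n} → Fin 2 :=
  fun p => x ((p : Fin (n+1)).castPred p.2)

def glueLEquiv : (Fin n → Fin 2) ≃ ({i' : Fin (n+1) // i' ≠ Fin.last n} → Fin 2) where
  toFun := glueL
  invFun y := fun i => y ⟨Fin.castSucc i, (Fin.castSucc_lt_last i).ne⟩
  left_inv x := by
    funext i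
    exact congrArg x (Fin.castPred_castSucc (Fin.castSucc_lt_last _).ne)
  right_inv y := by
    funext p
    exact congrArg y (Subtype.ext (Fin.castSucc_castPred _ p.2))

lemma sum_glueL (f : ({i' : Fin (n+1) // i' ≠ Fin.last n} → Fin 2) → ℝ) :
    ∑ x, f x = ∑ x : Fin n → Fin 2, f (glueL x) :=
  (Equiv.sum_comp (glueLEquiv (n := n)) f).symm

lemma eS_glueL_castSucc (c : Fin 2) (x : Fin n → Fin 2) :
    (fun i : Fin n => eS (Fin.last n) c (glueL x) (Fin.castSucc i)) = x := by
  funext i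
  rw [eS_ne _ (Fin.castSucc_lt_last i).ne]
  exact congrArg x (Fin.castPred_castSucc (Fin.castSucc_lt_last _).ne)

lemma Tm_ctrl_last (U' : Matrix (Fin n → Fin 2) (Fin n → Fin 2) ℂ) (x y : Fin n → Fin 2) :
    Tm (Fin.last n) (ctrlLast n U') (glueL x) (glueL y)
      = (if x = y then 1 else 0) + U' x y := by
  rw [Tm]
  have h1 : ∀ c : Fin 2, ctrlLast n U' (eS (Fin.last n) c (glueL x)) (eS (Fin.last n) c (glueL y))
      = if c = 0 then (if x = y then 1 else 0) else U' x y := by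
    intro c
    rw [ctrlLast, Matrix.of_apply]
    simp only [eS_j, eS_glueL_castSucc, if_true]
  simp only [h1, Fin.sum_univ_two]
  norm_num

lemma S2_last (U' : Matrix (Fin n → Fin 2) (Fin n → Fin 2) ℂ) :
    (∑ x, ∑ y, Complex.normSq (Tm (Fin.last n) (ctrlLast n U') x y))
      = 2^n + 2*(U'.trace).re +
        ∑ x : Fin n → Fin 2, ∑ y : Fin n → Fin 2, Complex.normSq (U' x y) := by
  rw [sum_glueL]
  have h1 : ∀ x, (∑ y, Complex.normSq (Tm (Fin.last n) (ctrlLast n U') (glueL x) y))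
      = ∑ y : Fin n → Fin 2, Complex.normSq (Tm (Fin.last n) (ctrlLast n U') (glueL x) (glueL y)) := by
    intro x
    rw [sum_glueL]
  simp only [h1, Tm_ctrl_last]
  have h2 : ∀ x y : Fin n → Fin 2,
      Complex.normSq ((if x = y then 1 else 0) + U' x y)
        = Complex.normSq (U' x y) + (if x = y then 1 + 2*(U' x y).re else 0) := by
    intro x y
    by_cases hxy : x = y
    · rw [if_pos hxy, if_pos hxy, Complex.normSq_add]
      simp [Complex.normSq_one]
      ring
    · rw [if_neg hxy, if_neg hxy, zero_add, add_zero]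
  simp only [h2]
  rw [show (∑ x : Fin n → Fin 2, ∑ y : Fin n → Fin 2,
      (Complex.normSq (U' x y) + (if x = y then 1 + 2*(U' x y).re else 0)))
    = (∑ x : Fin n → Fin 2, ∑ y : Fin n → Fin 2, Complex.normSq (U' x y))
      + ∑ x : Fin n → Fin 2, (1 + 2*(U' x x).re) by
    rw [← Finset.sum_add_distrib]
    refine Finset.sum_congr rfl fun x _ => ?_
    rw [Finset.sum_add_distrib]
    congr 1
    simp]
  rw [Finset.sum_add_distrib, Finset.sum_const, Finset.card_univ, Fintype.card_fun,
    Fintype.card_fin, nsmul_eq_mul, ← Finset.mul_sum]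
  rw [Matrix.trace, Complex.re_sum]
  simp [Matrix.diag]
  ring

lemma sum_normSq_unitary (U' : Matrix (Fin n → Fin 2) (Fin n → Fin 2) ℂ)
    (hU' : U' ∈ Matrix.unitaryGroup (Fin n → Fin 2) ℂ) :
    (∑ x : Fin n → Fin 2, ∑ y : Fin n → Fin 2, Complex.normSq (U' x y)) = 2^n := by
  have h := hU'.1
  have ht := congrArg (fun M : Matrix (Fin n → Fin 2) (Fin n → Fin 2) ℂ => (M.trace).re) h
  simp only [Matrix.trace, Matrix.diag, Matrix.mul_apply, Matrix.trace_one] at ht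
  rw [Complex.re_sum] at ht
  have : ∀ x : Fin n → Fin 2, (∑ y : Fin n → Fin 2, (star U') x y * U' y x).re
      = ∑ y : Fin n → Fin 2, Complex.normSq (U' y x) := by
    intro x
    rw [Complex.re_sum]
    refine Finset.sum_congr rfl fun y _ => ?_
    have : (star U') x y = (starRingEnd ℂ) (U' y x) := rfl
    rw [this, mul_comm, Complex.mul_conj]
    simp
  rw [Finset.sum_congr rfl fun x _ => this x] at ht
  rw [Finset.sum_comm] at ht
  rw [ht]
  norm_num [Matrix.one_apply, Complex.re_sum, Fintype.card_fun]
  rw [show ((2:ℂ)^n) = (((2:ℝ)^n : ℝ) : ℂ) by push_cast; ring, Complex.ofReal_re]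

end AuxCtrl

/-- For a unitary `U'` on `n ≥ 1` qubits, setting `U₁ = U'` and `U₂`
the controlled-`U'` on `n + 1` qubits (last qubit the control), and
`B(U₁) = 1 − C_LHST(U₁, I)`, `B(U₂) = 1 − C_LHST(U₂, I)`:
`Re(Tr U') = 2^n ((n+1)(2B(U₂) − 1) − n·B(U₁))`. -/
theorem stmt19 (n : ℕ) (hn : 1 ≤ n)
    (U' : Matrix (Fin n → Fin 2) (Fin n → Fin 2) ℂ)
    (hU' : U' ∈ Matrix.unitaryGroup (Fin n → Fin 2) ℂ) :
    (U'.trace).re =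
      2 ^ n * (((n : ℝ) + 1) * (2 * (1 - CLHST (n + 1) (ctrlLast n U') 1) - 1) -
        (n : ℝ) * (1 - CLHST n U' 1)) := by
  obtain ⟨k, rfl⟩ : ∃ k, n = k + 1 := ⟨n - 1, (Nat.succ_pred_eq_of_pos hn).symm⟩
  have hUsum := sum_normSq_unitary U' hU'
  have hFe1 : ∀ j : Fin (k+1), Fe (k+1) j U' 1
      = 1/2^(k+2) * ∑ x, ∑ y, Complex.normSq (Tm j U' x y) := by
    intro j
    rw [Fe_formula]
    simp only [Nat.add_sub_cancel]
    rw [show (1:ℝ)/4 * (1/2^k) = 1/2^(k+2) by rw [pow_succ, pow_succ]; ring]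
  have hFe2c : ∀ i : Fin (k+1), Fe (k+2) (Fin.castSucc i) (ctrlLast (k+1) U') 1
      = 1/2^(k+3) * (4*2^k + ∑ x, ∑ y, Complex.normSq (Tm i U' x y)) := by
    intro i
    rw [Fe_formula, S2_castSucc (by omega)]
    simp only [show k+2-1 = k+1 from rfl, Nat.add_sub_cancel]
    rw [show (1:ℝ)/4 * (1/2^(k+1)) = 1/2^(k+3) by
      rw [pow_succ, pow_succ, pow_succ, pow_succ]; ring]
  have hFe2l : Fe (k+2) (Fin.last (k+1)) (ctrlLast (k+1) U') 1
      = 1/2^(k+3) * (2^(k+1) + 2*(U'.trace).re + 2^(k+1)) := by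
    rw [Fe_formula, S2_last, hUsum]
    simp only [show k+2-1 = k+1 from rfl, Nat.add_sub_cancel]
    rw [show (1:ℝ)/4 * (1/2^(k+1)) = 1/2^(k+3) by
      rw [pow_succ, pow_succ, pow_succ, pow_succ]; ring]
  rw [CLHST, CLHST]
  simp only [CLHSTj, hFe1]
  rw [Fin.sum_univ_castSucc]
  simp only [hFe2c, hFe2l]
  rw [Finset.sum_sub_distrib, Finset.sum_sub_distrib, Finset.sum_const, Finset.card_univ,
    Fintype.card_fin, ← Finset.mul_sum, ← Finset.mul_sum]
  rw [Finset.sum_add_distrib, Finset.sum_const, Finset.card_univ, Fintype.card_fin]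
  set TT := ∑ i : Fin (k+1), ∑ x, ∑ y, Complex.normSq (Tm i U' x y) with hTT
  set R := (U'.trace).re with hR
  have hk1 : ((k:ℝ)+1) ≠ 0 := by positivity
  have hk2 : ((k:ℝ)+2) ≠ 0 := by positivity
  have hp : ((2:ℝ)^k) ≠ 0 := by positivity
  push_cast
  field_simp
  ring

end
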